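/- arXiv:2511.03082 — 2 statements merged into one kernel-verified Lean document; each statement's English description precedes it below -/
import Mathlib

section
/- For every complex number z with P_n(z) = 0 and z ≠ -1, we have |z| > √2 - 1, where P_n(z) = Σ_{k=0}^n B(n,k)·z^{n-k} and B(n,k) = C(n, ⌊(n-k)/2⌋). -/
def B (n k : ℕ) : ℕ := Nat.choose n ((n - k) / 2)

noncomputable def Pc (n : ℕ) (z : ℂ) : ℂ :=
  ∑ k ∈ Finset.range (n + 1), (B n k : ℂ) * z ^ (n - k)

lemma sum_range_even_odd {M : Type*} [AddCommMonoid M] (f : ℕ → M) (N : ℕ) :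
    ∑ j ∈ Finset.range (2 * N), f j = ∑ i ∈ Finset.range N, (f (2 * i) + f (2 * i + 1)) := by
  induction N with
  | zero => simp
  | succ N ih =>
      have h : 2 * (N + 1) = (2 * N + 1) + 1 := by ring
      rw [h, Finset.sum_range_succ, Finset.sum_range_succ, ih, Finset.sum_range_succ]
      abel

lemma Pc_eq (n : ℕ) (z : ℂ) :
    Pc n z = ∑ j ∈ Finset.range (n + 1), (n.choose (j / 2) : ℂ) * z ^ j := by
  rw [Pc, ← Finset.sum_range_reflect (fun j => (n.choose (j / 2) : ℂ) * z ^ j) (n + 1)]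
  refine Finset.sum_congr rfl fun k hk => ?_
  simp only [Finset.mem_range] at hk
  have : n + 1 - 1 - k = n - k := by omega
  rw [this, B]

lemma binom_expand (n : ℕ) (z : ℂ) :
    (1 + z ^ 2) ^ n = ∑ i ∈ Finset.range (n + 1), (n.choose i : ℂ) * z ^ (2 * i) := by
  rw [add_comm, add_pow]
  refine Finset.sum_congr rfl fun i _ => ?_
  rw [one_pow, mul_one, pow_mul]
  ring

lemma evenodd_pairs (n m : ℕ) (z : ℂ) :
    ∑ j ∈ Finset.range (2 * m), (n.choose (j / 2) : ℂ) * z ^ j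
      = (1 + z) * ∑ i ∈ Finset.range m, (n.choose i : ℂ) * z ^ (2 * i) := by
  rw [sum_range_even_odd, Finset.mul_sum]
  refine Finset.sum_congr rfl fun i _ => ?_
  have h1 : (2 * i) / 2 = i := by omega
  have h2 : (2 * i + 1) / 2 = i := by omega
  rw [h1, h2, pow_succ]
  ring

lemma odd_factor (m : ℕ) (z : ℂ) :
    ∑ j ∈ Finset.range (2 * m + 2), ((2 * m + 1).choose (j / 2) : ℂ) * z ^ j
      = (1 + z) * ∑ i ∈ Finset.range (m + 1), ((2 * m + 1).choose i : ℂ) * z ^ (2 * i) := by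
  have h : 2 * m + 2 = 2 * (m + 1) := by ring
  rw [h, evenodd_pairs]

lemma even_factor (m : ℕ) (z : ℂ) :
    ∑ j ∈ Finset.range (2 * m + 1), ((2 * m).choose (j / 2) : ℂ) * z ^ j
      = (1 + z) * (∑ i ∈ Finset.range (m + 1), ((2 * m).choose i : ℂ) * z ^ (2 * i))
        - ((2 * m).choose m : ℂ) * z ^ (2 * m + 1) := by
  rw [Finset.sum_range_succ, evenodd_pairs, Finset.sum_range_succ]
  have h1 : (2 * m) / 2 = m := by omega
  rw [h1, pow_succ]
  ring

lemma abs_one_add_ge (w : ℂ) : 1 - ‖w‖ ≤ ‖1 + w‖ := by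
  have h := norm_add_le (1 + w) (-w)
  simp only [add_neg_cancel_right, norm_one, norm_neg] at h
  linarith

lemma U_bound (n m N : ℕ) (z : ℂ) (r : ℝ) (hs : ‖z‖ ≤ r) (hr1 : r ≤ 1) :
    ‖∑ i ∈ Finset.Ico (m + 1) N, (n.choose i : ℂ) * z ^ (2 * i)‖
      ≤ (∑ i ∈ Finset.Ico (m + 1) N, (n.choose i : ℝ)) * r ^ (2 * m + 2) := by
  have hs0 : 0 ≤ ‖z‖ := norm_nonneg z
  have hr0 : 0 ≤ r := le_trans hs0 hs
  calc ‖∑ i ∈ Finset.Ico (m + 1) N, (n.choose i : ℂ) * z ^ (2 * i)‖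
      ≤ ∑ i ∈ Finset.Ico (m + 1) N, ‖(n.choose i : ℂ) * z ^ (2 * i)‖ :=
        norm_sum_le _ _
    _ ≤ ∑ i ∈ Finset.Ico (m + 1) N, (n.choose i : ℝ) * r ^ (2 * m + 2) := by
        refine Finset.sum_le_sum fun i hi => ?_
        simp only [Finset.mem_Ico] at hi
        rw [norm_mul, norm_pow, Complex.norm_natCast]
        refine mul_le_mul_of_nonneg_left ?_ (Nat.cast_nonneg _)
        calc ‖z‖ ^ (2 * i) ≤ r ^ (2 * i) := pow_le_pow_left₀ hs0 hs _
          _ ≤ r ^ (2 * m + 2) := pow_le_pow_of_le_one hr0 hr1 (by omega)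
    _ = (∑ i ∈ Finset.Ico (m + 1) N, (n.choose i : ℝ)) * r ^ (2 * m + 2) := by
        rw [Finset.sum_mul]

set_option maxHeartbeats 1000000 in
theorem pascalian_roots_lower_bound (n : ℕ) (z : ℂ)
    (hz : Pc n z = 0) (hz' : z ≠ -1) : Real.sqrt 2 - 1 < ‖z‖ := by
  by_contra hlt
  push_neg at hlt
  set r : ℝ := Real.sqrt 2 - 1 with hrdef
  set s : ℝ := ‖z‖ with hsdef
  have h2 : Real.sqrt 2 * Real.sqrt 2 = 2 := Real.mul_self_sqrt (by norm_num)
  have hsq0 : 0 ≤ Real.sqrt 2 := Real.sqrt_nonneg 2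
  have hsqrt1 : 1 < Real.sqrt 2 := by nlinarith
  have hsqrt2 : Real.sqrt 2 < 2 := by nlinarith
  have hr0 : 0 < r := by rw [hrdef]; linarith
  have hr1 : r < 1 := by rw [hrdef]; linarith
  have hs0 : 0 ≤ s := norm_nonneg z
  have h1z : (1 : ℂ) + z ≠ 0 := by
    intro h
    exact hz' (by linear_combination h)
  have habs1z : 1 - s ≤ ‖1 + z‖ := abs_one_add_ge z
  have habs1z2 : 1 - s ^ 2 ≤ ‖1 + z ^ 2‖ := by
    have h := abs_one_add_ge (z ^ 2)
    rwa [norm_pow] at h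
  have habs1zub : ‖1 + z‖ ≤ Real.sqrt 2 := by
    have h := norm_add_le 1 z
    rw [norm_one] at h
    have h' : 1 + r = Real.sqrt 2 := by rw [hrdef]; ring
    linarith
  have e1 : 1 - r = Real.sqrt 2 * r := by rw [hrdef]; linear_combination -h2
  have e2 : 1 - r ^ 2 = 2 * r := by rw [hrdef]; linear_combination -h2
  have hsr2 : s ^ 2 ≤ r ^ 2 := by nlinarith
  have hr2pos : 0 ≤ 1 - r ^ 2 := by linarith
  have hs2le : 1 - r ^ 2 ≤ 1 - s ^ 2 := by linarith
  have hs2pos : 0 ≤ 1 - s ^ 2 := le_trans hr2pos hs2le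
  have h1spos : 0 ≤ 1 - s := by linarith
  obtain ⟨m, hm | hm⟩ := Nat.even_or_odd' n <;> subst hm
  · -- even case: n = 2*m
    have hPc := Pc_eq (2 * m) z
    rw [even_factor] at hPc
    set S : ℂ := ∑ i ∈ Finset.range (m + 1), ((2 * m).choose i : ℂ) * z ^ (2 * i) with hSdef
    set U : ℂ := ∑ i ∈ Finset.Ico (m + 1) (2 * m + 1), ((2 * m).choose i : ℂ) * z ^ (2 * i)
      with hUdef
    have hSU : (1 + z ^ 2) ^ (2 * m) = S + U := by
      rw [binom_expand]
      exact (Finset.sum_range_add_sum_Ico _ (by omega)).symm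
    have hkey : (1 + z) * S = ((2 * m).choose m : ℂ) * z ^ (2 * m + 1) := by
      have h0 : (1 + z) * S - ((2 * m).choose m : ℂ) * z ^ (2 * m + 1) = 0 := by
        rw [← hPc]; exact hz
      linear_combination h0
    have hfull : (1 + z) * (1 + z ^ 2) ^ (2 * m)
        = ((2 * m).choose m : ℂ) * z ^ (2 * m + 1) + (1 + z) * U := by
      rw [hSU, mul_add, hkey]
    set C : ℝ := ((2 * m).choose m : ℝ) with hCdef
    set A : ℝ := ∑ i ∈ Finset.Ico (m + 1) (2 * m + 1), ((2 * m).choose i : ℝ) with hAdef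
    have hnat : (2 * m).choose m + ∑ i ∈ Finset.Ico (m + 1) (2 * m + 1), (2 * m).choose i
        ≤ 4 ^ m := by
      have h1 : ∑ i ∈ Finset.range (m + 1), (2 * m).choose i
          + ∑ i ∈ Finset.Ico (m + 1) (2 * m + 1), (2 * m).choose i
          = ∑ i ∈ Finset.range (2 * m + 1), (2 * m).choose i :=
        Finset.sum_range_add_sum_Ico _ (by omega)
      have hch := Nat.sum_range_choose (2 * m)
      have h3 : (2 : ℕ) ^ (2 * m) = 4 ^ m := by rw [pow_mul]; norm_num
      have h4 : (2 * m).choose m ≤ ∑ i ∈ Finset.range (m + 1), (2 * m).choose i :=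
        Finset.single_le_sum (fun i _ => Nat.zero_le _) (Finset.self_mem_range_succ m)
      omega
    have hCA : C + A ≤ (4 : ℝ) ^ m := by
      rw [hCdef, hAdef]
      exact_mod_cast hnat
    have hC1 : (1 : ℝ) ≤ C := by
      rw [hCdef]
      exact_mod_cast Nat.choose_pos (show m ≤ 2 * m by omega)
    have hA0 : 0 ≤ A := by rw [hAdef]; positivity
    have hUb : ‖U‖ ≤ A * r ^ (2 * m + 2) := U_bound _ _ _ z r hlt hr1.le
    have e3 : (1 - r) * (1 - r ^ 2) ^ (2 * m) = Real.sqrt 2 * ((4 : ℝ) ^ m * r ^ (2 * m + 1)) := by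
      rw [e2, e1, mul_pow]
      have h4 : (2 : ℝ) ^ (2 * m) = 4 ^ m := by rw [pow_mul]; norm_num
      rw [h4]; ring
    have hL : Real.sqrt 2 * ((4 : ℝ) ^ m * r ^ (2 * m + 1))
        ≤ ‖(1 + z) * (1 + z ^ 2) ^ (2 * m)‖ := by
      calc Real.sqrt 2 * ((4 : ℝ) ^ m * r ^ (2 * m + 1))
          = (1 - r) * (1 - r ^ 2) ^ (2 * m) := e3.symm
        _ ≤ (1 - s) * (1 - s ^ 2) ^ (2 * m) :=
            mul_le_mul (by linarith) (pow_le_pow_left₀ hr2pos hs2le _)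
              (pow_nonneg hr2pos _) h1spos
        _ ≤ ‖1 + z‖ * ‖1 + z ^ 2‖ ^ (2 * m) :=
            mul_le_mul habs1z (pow_le_pow_left₀ hs2pos habs1z2 _)
              (pow_nonneg hs2pos _) (norm_nonneg _)
        _ = ‖(1 + z) * (1 + z ^ 2) ^ (2 * m)‖ := by rw [norm_mul, norm_pow]
    have hR : ‖((2 * m).choose m : ℂ) * z ^ (2 * m + 1) + (1 + z) * U‖
        ≤ C * r ^ (2 * m + 1) + Real.sqrt 2 * (A * r ^ (2 * m + 2)) := by
      calc ‖((2 * m).choose m : ℂ) * z ^ (2 * m + 1) + (1 + z) * U‖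
          ≤ ‖((2 * m).choose m : ℂ) * z ^ (2 * m + 1)‖
            + ‖(1 + z) * U‖ := norm_add_le _ _
        _ ≤ C * r ^ (2 * m + 1) + Real.sqrt 2 * (A * r ^ (2 * m + 2)) := by
            apply add_le_add
            · rw [norm_mul, norm_pow, Complex.norm_natCast, ← hCdef]
              exact mul_le_mul_of_nonneg_left (pow_le_pow_left₀ hs0 hlt _) (by linarith)
            · rw [norm_mul]
              exact mul_le_mul habs1zub hUb (norm_nonneg _) hsq0
    have heq : ‖(1 + z) * (1 + z ^ 2) ^ (2 * m)‖
        = ‖((2 * m).choose m : ℂ) * z ^ (2 * m + 1) + (1 + z) * U‖ := by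
      rw [hfull]
    have hmain : Real.sqrt 2 * ((4 : ℝ) ^ m * r ^ (2 * m + 1))
        ≤ C * r ^ (2 * m + 1) + Real.sqrt 2 * (A * r ^ (2 * m + 2)) := by
      rw [heq] at hL; linarith
    have hp : 0 < r ^ (2 * m + 1) := pow_pos hr0 _
    have hps : r ^ (2 * m + 2) = r ^ (2 * m + 1) * r := by rw [← pow_succ]
    rw [hps] at hmain
    set p : ℝ := r ^ (2 * m + 1)
    have key1 : Real.sqrt 2 * (A * (p * r)) = A * p - A * p * r := by
      linear_combination (-(A * p)) * e1
    rw [key1] at hmain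
    -- now: √2 * (4^m * p) ≤ C * p + (A*p - A*p*r)
    have hCp : (C + A) * p ≤ (4 : ℝ) ^ m * p := mul_le_mul_of_nonneg_right hCA hp.le
    have hS2 : Real.sqrt 2 * ((C + A) * p) ≤ Real.sqrt 2 * ((4 : ℝ) ^ m * p) :=
      mul_le_mul_of_nonneg_left hCp hsq0
    have hApr : 0 ≤ A * p * r := by positivity
    have hx1 : 0 ≤ (Real.sqrt 2 - 1) * ((C + A - 1) * p) :=
      mul_nonneg (by linarith) (mul_nonneg (by linarith) hp.le)
    have hx2 : 0 < (Real.sqrt 2 - 1) * p := mul_pos (by linarith) hp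
    nlinarith [hmain, hS2, hApr, hx1, hx2]
  · -- odd case: n = 2*m+1
    have hPc := Pc_eq (2 * m + 1) z
    have hrange : 2 * m + 1 + 1 = 2 * m + 2 := by ring
    rw [hrange, odd_factor] at hPc
    set S : ℂ := ∑ i ∈ Finset.range (m + 1), ((2 * m + 1).choose i : ℂ) * z ^ (2 * i) with hSdef
    set U : ℂ := ∑ i ∈ Finset.Ico (m + 1) (2 * m + 1 + 1), ((2 * m + 1).choose i : ℂ) * z ^ (2 * i)
      with hUdef
    have hS : S = 0 := by
      rcases mul_eq_zero.mp (hPc ▸ hz) with h | h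
      · exact absurd h h1z
      · exact h
    have hSU : (1 + z ^ 2) ^ (2 * m + 1) = U := by
      rw [binom_expand, ← Finset.sum_range_add_sum_Ico _ (show m + 1 ≤ 2 * m + 1 + 1 by omega),
        ← hSdef, ← hUdef, hS, zero_add]
    have hnat : ∑ i ∈ Finset.Ico (m + 1) (2 * m + 1 + 1), (2 * m + 1).choose i = 4 ^ m := by
      have h1 : ∑ i ∈ Finset.range (m + 1), (2 * m + 1).choose i
          + ∑ i ∈ Finset.Ico (m + 1) (2 * m + 1 + 1), (2 * m + 1).choose i
          = ∑ i ∈ Finset.range (2 * m + 1 + 1), (2 * m + 1).choose i :=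
        Finset.sum_range_add_sum_Ico _ (by omega)
      have hch := Nat.sum_range_choose (2 * m + 1)
      have hhalf := Nat.sum_range_choose_halfway m
      have h3 : (2 : ℕ) ^ (2 * m + 1) = 2 * 4 ^ m := by rw [pow_succ, pow_mul]; ring
      omega
    have hA : ∑ i ∈ Finset.Ico (m + 1) (2 * m + 1 + 1), ((2 * m + 1).choose i : ℝ)
        = (4 : ℝ) ^ m := by exact_mod_cast hnat
    have hUb : ‖U‖ ≤ (4 : ℝ) ^ m * r ^ (2 * m + 2) := by
      have h := U_bound (2 * m + 1) m (2 * m + 1 + 1) z r hlt hr1.le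
      rwa [hA] at h
    have hL : 2 * ((4 : ℝ) ^ m * r ^ (2 * m + 1))
        ≤ ‖(1 + z ^ 2) ^ (2 * m + 1)‖ := by
      have e3 : (1 - r ^ 2) ^ (2 * m + 1) = 2 * ((4 : ℝ) ^ m * r ^ (2 * m + 1)) := by
        rw [e2, mul_pow]
        have h4 : (2 : ℝ) ^ (2 * m + 1) = 2 * 4 ^ m := by rw [pow_succ, pow_mul]; ring
        rw [h4]; ring
      calc 2 * ((4 : ℝ) ^ m * r ^ (2 * m + 1)) = (1 - r ^ 2) ^ (2 * m + 1) := e3.symm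
        _ ≤ (1 - s ^ 2) ^ (2 * m + 1) := pow_le_pow_left₀ hr2pos hs2le _
        _ ≤ ‖1 + z ^ 2‖ ^ (2 * m + 1) := pow_le_pow_left₀ hs2pos habs1z2 _
        _ = ‖(1 + z ^ 2) ^ (2 * m + 1)‖ := (norm_pow _ _).symm
    rw [hSU] at hL
    have hp : 0 < r ^ (2 * m + 1) := pow_pos hr0 _
    have hps : r ^ (2 * m + 2) = r ^ (2 * m + 1) * r := by rw [← pow_succ]
    have h4m : (0 : ℝ) < (4 : ℝ) ^ m := by positivity
    rw [hps] at hUb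
    have hfin : (4 : ℝ) ^ m * (r ^ (2 * m + 1) * r) < 2 * ((4 : ℝ) ^ m * r ^ (2 * m + 1)) := by
      nlinarith [mul_pos h4m hp, mul_pos (mul_pos h4m hp) hr0]
    linarith
end

section
/- For n ≥ 2 and any complex number z, if P_n(z) = 0 and P_{n-1}(z) = 0 then False; i.e., consecutive Pascalian polynomials share no common root. -/
open Finset

lemma Pc_rev (n : ℕ) (z : ℂ) :
    Pc n z = ∑ j ∈ range (n + 1), (Nat.choose n (j / 2) : ℂ) * z ^ j := by
  rw [Pc, ← Finset.sum_range_reflect (fun j => (Nat.choose n (j / 2) : ℂ) * z ^ j) (n + 1)]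
  apply Finset.sum_congr rfl
  intro k hk
  simp [B]

lemma choose_half (m : ℕ) :
    Nat.choose (m + 1) ((m + 2) / 2) = Nat.choose (m + 1) ((m + 1) / 2) := by
  rcases Nat.even_or_odd m with ⟨t, ht⟩ | ⟨t, ht⟩
  · subst ht
    have h1 : (t + t + 2) / 2 = t + 1 := by omega
    have h2 : (t + t + 1) / 2 = t := by omega
    rw [h1, h2, ← Nat.choose_symm (by omega : t + 1 ≤ t + t + 1)]
    congr 1
    omega
  · subst ht
    have h1 : (2 * t + 1 + 2) / 2 = t + 1 := by omega
    have h2 : (2 * t + 1 + 1) / 2 = t + 1 := by omega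
    rw [h1, h2]

lemma pascal_div (m j : ℕ) (hj : 2 ≤ j) :
    Nat.choose (m + 2) (j / 2) =
      Nat.choose (m + 1) (j / 2) + Nat.choose (m + 1) ((j - 2) / 2) := by
  obtain ⟨i, rfl⟩ : ∃ i, j = i + 2 := ⟨j - 2, by omega⟩
  have h1 : (i + 2) / 2 = i / 2 + 1 := by omega
  have h2 : (i + 2 - 2) / 2 = i / 2 := by omega
  rw [h1, h2, Nat.choose_succ_succ]
  exact Nat.add_comm _ _

lemma Pc_rec (m : ℕ) (z : ℂ) :
    Pc (m + 2) z = (1 + z ^ 2) * Pc (m + 1) z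
      + (Nat.choose (m + 1) ((m + 1) / 2) : ℂ) * (1 - z) * z ^ (m + 2) := by
  rw [Pc_rev, Pc_rev]
  set c := (Nat.choose (m + 1) ((m + 1) / 2) : ℂ) with hc
  set S := ∑ j ∈ range (m + 2), (Nat.choose (m + 1) (j / 2) : ℂ) * z ^ j with hS
  have step : ∀ j ∈ range (m + 3), (Nat.choose (m + 2) (j / 2) : ℂ) * z ^ j
      = (Nat.choose (m + 1) (j / 2) : ℂ) * z ^ j
        + (if 2 ≤ j then (Nat.choose (m + 1) ((j - 2) / 2) : ℂ) * z ^ j else 0) := by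
    intro j _
    by_cases hj : 2 ≤ j
    · rw [if_pos hj, pascal_div m j hj]
      push_cast
      ring
    · rw [if_neg hj]
      interval_cases j <;> simp
  rw [Finset.sum_congr rfl step, Finset.sum_add_distrib]
  have e1 : ∑ j ∈ range (m + 3), (Nat.choose (m + 1) (j / 2) : ℂ) * z ^ j
      = S + c * z ^ (m + 2) := by
    rw [Finset.sum_range_succ, choose_half m]
  have e2 : ∑ j ∈ range (m + 3),
      (if 2 ≤ j then (Nat.choose (m + 1) ((j - 2) / 2) : ℂ) * z ^ j else 0)
      = z ^ 2 * S - c * z ^ (m + 3) := by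
    rw [Finset.sum_range_succ', Finset.sum_range_succ']
    have h0 : ¬ (2 ≤ 0) := by omega
    have h1 : ¬ (2 ≤ 0 + 1) := by omega
    rw [if_neg h0, if_neg h1]
    have e3 : ∀ j ∈ range (m + 1),
        (if 2 ≤ j + 1 + 1 then (Nat.choose (m + 1) ((j + 1 + 1 - 2) / 2) : ℂ) * z ^ (j + 1 + 1) else 0)
        = (Nat.choose (m + 1) (j / 2) : ℂ) * z ^ (j + 2) := by
      intro j _
      rw [if_pos (by omega)]
      rfl
    rw [Finset.sum_congr rfl e3]
    have e4 : z ^ 2 * S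
        = (∑ j ∈ range (m + 1), (Nat.choose (m + 1) (j / 2) : ℂ) * z ^ (j + 2))
          + c * z ^ (m + 3) := by
      rw [hS, Finset.sum_range_succ, mul_add]
      congr 1
      · rw [Finset.mul_sum]
        apply Finset.sum_congr rfl
        intro j _
        ring
      · rw [hc]
        ring
    rw [e4]
    ring
  rw [e1, e2]
  ring

lemma Pc_zero_ne (n : ℕ) : Pc n 0 ≠ 0 := by
  rw [Pc_rev]
  rw [Finset.sum_eq_single 0]
  · simp
  · intro j _ hj
    rw [zero_pow hj, mul_zero]
  · intro h
    exact absurd (Finset.mem_range.mpr (by omega)) h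

lemma Pc_one_ne (n : ℕ) : Pc n 1 ≠ 0 := by
  have h : Pc n 1 = ((∑ k ∈ range (n + 1), B n k : ℕ) : ℂ) := by
    simp [Pc]
  rw [h]
  rw [Nat.cast_ne_zero]
  have hpos : 0 < ∑ k ∈ range (n + 1), B n k := by
    apply Finset.sum_pos
    · intro k _
      exact Nat.choose_pos (by omega)
    · exact ⟨0, Finset.mem_range.mpr (by omega)⟩
  omega

theorem pascalian_consecutive_no_common_root (n : ℕ) (hn : 2 ≤ n) (z : ℂ)
    (h1 : Pc n z = 0) (h2 : Pc (n - 1) z = 0) : False := by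
  obtain ⟨m, rfl⟩ : ∃ m, n = m + 2 := ⟨n - 2, by omega⟩
  have h2' : Pc (m + 1) z = 0 := by
    have : m + 2 - 1 = m + 1 := rfl
    rwa [this] at h2
  have hrec := Pc_rec m z
  rw [h1, h2'] at hrec
  have hkey : (Nat.choose (m + 1) ((m + 1) / 2) : ℂ) * (1 - z) * z ^ (m + 2) = 0 := by
    linear_combination -hrec
  have hcne : (Nat.choose (m + 1) ((m + 1) / 2) : ℂ) ≠ 0 :=
    Nat.cast_ne_zero.mpr (Nat.choose_pos (by omega)).ne'
  rcases mul_eq_zero.mp hkey with h | h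
  · rcases mul_eq_zero.mp h with h' | h'
    · exact hcne h'
    · have hz : z = 1 := by linear_combination -h'
      rw [hz] at h2'
      exact Pc_one_ne (m + 1) h2'
  · have hz : z = 0 := pow_eq_zero_iff (by omega) |>.mp h
    rw [hz] at h2'
    exact Pc_zero_ne (m + 1) h2'
end
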